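/- If the walk driven by a non-degenerate arrow environment a, started at 0, never hits −1 (T₋₁ = ∞), then for every n ≥ 0 the number W_n of right crossings of the edge {n−1,n} satisfies: W_n equals 1 plus the number of left crossings of {n−1,n} by the walk; equivalently, the total number of crossings of the edge {n−1,n} is 2W_n − 1. -/

import Mathlib

open Filter Set

/-- The number of `true`s (1's) appearing strictly before the `x`-th `false` (0)
in the binary sequence `b`; `Uplus b 0 = 0`. -/
noncomputable def Uplus (b : ℕ → Bool) (x : ℕ) : ℕ :=
  if x = 0 then 0
  else sInf {j : ℕ | ((Finset.range j).filter (fun i => b i = false)).card = x} - x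

/-- The number of `false`s (0's) appearing strictly before the `x`-th `true` (1). -/
noncomputable def Uminus (b : ℕ → Bool) (x : ℕ) : ℕ :=
  Uplus (fun i => !(b i)) x

/-- A binary sequence is non-degenerate if it has infinitely many 0's and
infinitely many 1's. -/
def NonDeg (b : ℕ → Bool) : Prop :=
  {i | b i = false}.Infinite ∧ {i | b i = true}.Infinite

/-- An arrow environment is non-degenerate if every column is non-degenerate. -/
def NonDegEnv (a : ℤ → ℕ → Bool) : Prop := ∀ x : ℤ, NonDeg (a x)

/-- The history (most recent position first) of the walk driven by the arrow
environment `a`, started at `0`: at its `k`-th visit (`k` counted from `0`)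
to site `x` the walk moves right if `a x k = true` and left otherwise. -/
def walkHist (a : ℤ → ℕ → Bool) : ℕ → List ℤ
  | 0 => [0]
  | t + 1 =>
    let h := walkHist a t
    let x := h.headI
    let k := h.countP (fun y => decide (y = x)) - 1
    (x + (if a x k then 1 else -1)) :: h

/-- The position at time `t` of the walk driven by `a`, started at `0`. -/
def walk (a : ℤ → ℕ → Bool) (t : ℕ) : ℤ := (walkHist a t).headI

/-- `Zplus a n y`: the forward process `Z⁺` with initial value `y`. -/
noncomputable def Zplus (a : ℤ → ℕ → Bool) : ℕ → ℕ → ℕ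
  | 0, y => y
  | n + 1, y => Uplus (a (n : ℤ)) (Zplus a n y)

/-- `Zminus a n y`: the backward process `Z⁻` with initial value `y`. -/
noncomputable def Zminus (a : ℤ → ℕ → Bool) : ℕ → ℕ → ℕ
  | 0, y => y
  | n + 1, y => Uminus (a (-(n : ℤ))) (Zminus a n y)

/-- `ZminusBack a l y = U⁻_{a 0} ∘ ⋯ ∘ U⁻_{a (l-1)} (y)`. -/
noncomputable def ZminusBack (a : ℤ → ℕ → Bool) (l y : ℕ) : ℕ :=
  (List.range l).foldr (fun i z => Uminus (a (i : ℤ)) z) y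

lemma walk_zero (a : ℤ → ℕ → Bool) : walk a 0 = 0 := rfl

lemma walkHist_succ (a : ℤ → ℕ → Bool) (t : ℕ) :
    walkHist a (t + 1) =
      (walk a t + (if a (walk a t)
          ((walkHist a t).countP (fun y => decide (y = walk a t)) - 1) then 1 else -1))
        :: walkHist a t := rfl

lemma walk_succ (a : ℤ → ℕ → Bool) (t : ℕ) :
    walk a (t + 1) = walk a t + (if a (walk a t)
      ((walkHist a t).countP (fun y => decide (y = walk a t)) - 1) then 1 else -1) := by
  rw [walk, walkHist_succ]; rfl

lemma walk_step (a : ℤ → ℕ → Bool) (t : ℕ) :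
    walk a (t + 1) = walk a t + 1 ∨ walk a (t + 1) = walk a t - 1 := by
  rw [walk_succ]
  split <;> simp [sub_eq_add_neg]

lemma countP_walkHist (a : ℤ → ℕ → Bool) (t : ℕ) (x : ℤ) :
    (walkHist a t).countP (fun y => decide (y = x)) =
      Nat.count (fun s => walk a s = x) (t + 1) := by
  induction t with
  | zero =>
      by_cases hx : x = (0:ℤ) <;>
        simp [walkHist, Nat.count_succ, walk_zero, List.countP, List.countP.go, hx, eq_comm]

  | succ t ih =>
      rw [walkHist_succ, List.countP_cons, ih, Nat.count_succ (p := fun s => walk a s = x) (t + 1)]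
      have : walk a (t+1) = (walk a t + (if a (walk a t)
          ((walkHist a t).countP (fun y => decide (y = walk a t)) - 1) then 1 else -1)) := walk_succ a t
      by_cases hx : walk a (t+1) = x <;> simp [hx, ← this]

lemma walk_nonneg (a : ℤ → ℕ → Bool) (h : ∀ t, walk a t ≠ -1) (t : ℕ) : 0 ≤ walk a t := by
  induction t with
  | zero => simp [walk_zero]
  | succ t ih =>
      rcases walk_step a t with h1 | h1
      · omega
      · have := h (t + 1); omega

/-- If site `x` is visited infinitely often, so is `x - 1`. -/
lemma visits_infinite_pred (a : ℤ → ℕ → Bool) (hnd : NonDegEnv a) (x : ℤ)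
    (hx : {t : ℕ | walk a t = x}.Infinite) : {t : ℕ | walk a t = x - 1}.Infinite := by
  set p : ℕ → Prop := fun s => walk a s = x with hp
  have key : ∀ k : ℕ, walk a (Nat.nth p k + 1) = x + (if a x k then 1 else -1) := by
    intro k
    have hmem : walk a (Nat.nth p k) = x := Nat.nth_mem_of_infinite hx k
    have hcount : Nat.count p (Nat.nth p k + 1) = k + 1 := Nat.count_nth_succ_of_infinite hx k
    rw [walk_succ, hmem, countP_walkHist, hcount]
    simp
  have hinf : {k : ℕ | a x k = false}.Infinite := (hnd x).1
  have himg : {t : ℕ | walk a t = x - 1} ⊇ (fun k => Nat.nth p k + 1) '' {k | a x k = false} := by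
    rintro t ⟨k, hk, rfl⟩
    have := key k
    simp only [Set.mem_setOf_eq] at hk
    rw [Set.mem_setOf_eq, this, hk]
    simp; ring
  refine Set.Infinite.mono himg ?_
  exact Set.Infinite.image (fun i _ j _ hij => by
    have := (Nat.nth_strictMono hx).injective (a₁ := i) (a₂ := j); omega) hinf

lemma visits_finite (a : ℤ → ℕ → Bool) (hnd : NonDegEnv a) (h : ∀ t, walk a t ≠ -1) (x : ℤ) :
    {t : ℕ | walk a t = x}.Finite := by
  by_contra hc
  have hinf : {t : ℕ | walk a t = x}.Infinite := hc
  -- descend from x to -1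
  have desc : ∀ m : ℕ, {t : ℕ | walk a t = x - m}.Infinite := by
    intro m
    induction m with
    | zero => simpa using hinf
    | succ m ih =>
        have := visits_infinite_pred a hnd (x - m) ih
        have he : x - (m : ℤ) - 1 = x - ((m : ℕ) + 1 : ℕ) := by push_cast; ring
        rwa [he] at this
  -- x ≥ 0 since visited
  have hx0 : 0 ≤ x := by
    obtain ⟨t, ht⟩ := hinf.nonempty
    have := walk_nonneg a h t
    simp only [Set.mem_setOf_eq] at ht; omega
  obtain ⟨t, ht⟩ := (desc (x.toNat + 1)).nonempty
  simp only [Set.mem_setOf_eq] at ht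
  have : walk a t = -1 := by rw [ht]; push_cast; omega
  exact h t this

lemma walk_eventually_ge (a : ℤ → ℕ → Bool) (hnd : NonDegEnv a) (h : ∀ t, walk a t ≠ -1)
    (N : ℤ) : ∃ T : ℕ, ∀ t ≥ T, N ≤ walk a t := by
  have hS : {t : ℕ | walk a t < N}.Finite := by
    have hsub : {t : ℕ | walk a t < N} ⊆ ⋃ x ∈ Set.Icc (0 : ℤ) (N - 1), {t : ℕ | walk a t = x} := by
      intro t ht
      simp only [Set.mem_setOf_eq] at ht
      have := walk_nonneg a h t
      exact Set.mem_biUnion (Set.mem_Icc.mpr ⟨this, by omega⟩) rfl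
    exact Set.Finite.subset ((Set.finite_Icc _ _).biUnion fun x _ => visits_finite a hnd h x) hsub
  obtain ⟨B, hB⟩ := hS.bddAbove
  refine ⟨B + 1, fun t ht => ?_⟩
  by_contra hc
  have : t ≤ B := hB (by simp only [Set.mem_setOf_eq]; omega)
  omega

lemma flip_count_aux (f : ℕ → Bool) (h0 : f 0 = false) :
    ∀ m : ℕ, ((Finset.range m).filter fun t => f t = false ∧ f (t + 1) = true).card
      = ((Finset.range m).filter fun t => f t = true ∧ f (t + 1) = false).card
        + (if f m then 1 else 0) := by
  intro m
  induction m with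
  | zero => simp [h0]
  | succ m ih =>
      rw [Finset.range_add_one, Finset.filter_insert, Finset.filter_insert]
      rcases Bool.eq_false_or_eq_true (f m) with hm | hm <;>
        rcases Bool.eq_false_or_eq_true (f (m + 1)) with hm1 | hm1 <;>
          simp [hm, hm1, Finset.card_insert_of_notMem, Finset.notMem_range_self] at ih ⊢ <;>
            omega

lemma flip_count (f : ℕ → Bool) (h0 : f 0 = false) (T : ℕ) (hT : ∀ t ≥ T, f t = true) :
    Set.ncard {t : ℕ | f t = false ∧ f (t + 1) = true}
      = Set.ncard {t : ℕ | f t = true ∧ f (t + 1) = false} + 1 := by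
  have hup : {t : ℕ | f t = false ∧ f (t + 1) = true}
      = ↑((Finset.range T).filter fun t => f t = false ∧ f (t + 1) = true) := by
    ext t
    simp only [Set.mem_setOf_eq, Finset.coe_filter, Finset.mem_range]
    constructor
    · rintro ⟨h1, h2⟩
      refine ⟨?_, h1, h2⟩
      by_contra hc
      have := hT t (by omega)
      simp [this] at h1
    · rintro ⟨_, h1, h2⟩; exact ⟨h1, h2⟩
  have hdn : {t : ℕ | f t = true ∧ f (t + 1) = false}
      = ↑((Finset.range T).filter fun t => f t = true ∧ f (t + 1) = false) := by
    ext t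
    simp only [Set.mem_setOf_eq, Finset.coe_filter, Finset.mem_range]
    constructor
    · rintro ⟨h1, h2⟩
      refine ⟨?_, h1, h2⟩
      by_contra hc
      have := hT (t + 1) (by omega)
      simp [this] at h2
    · rintro ⟨_, h1, h2⟩; exact ⟨h1, h2⟩
  rw [hup, hdn, Set.ncard_coe_finset, Set.ncard_coe_finset, flip_count_aux f h0 T,
    hT T le_rfl]
  simp

/-- if `T₋₁ = ∞`, then for every `n` the number `W_n` of right
crossings of `{n-1,n}` (with `W₀ = 1`) equals one plus the number of left
crossings of `{n-1,n}`. -/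
theorem stmt_8 (a : ℤ → ℕ → Bool) (hnd : NonDegEnv a) (h : ∀ t, walk a t ≠ -1) :
    ∀ n : ℕ,
      (if n = 0 then 1
        else Set.ncard {t : ℕ | walk a t = (n : ℤ) - 1 ∧ walk a (t + 1) = (n : ℤ)})
      = Set.ncard {t : ℕ | walk a t = (n : ℤ) ∧ walk a (t + 1) = (n : ℤ) - 1} + 1 := by
  intro n
  rcases Nat.eq_zero_or_pos n with hn | hn
  · subst hn
    have : {t : ℕ | walk a t = (0 : ℤ) ∧ walk a (t + 1) = (-1 : ℤ)} = ∅ := by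
      ext t
      simp only [Set.mem_setOf_eq, Set.mem_empty_iff_false, iff_false, not_and]
      intro _
      have := h (t + 1); omega
    simp [this]
  · have hn' : n ≠ 0 := by omega
    rw [if_neg hn']
    set f : ℕ → Bool := fun t => decide ((n : ℤ) ≤ walk a t) with hf
    have h0 : f 0 = false := by
      simp only [hf, decide_eq_false_iff_not, not_le, walk_zero]
      exact decide_eq_false (by omega)
    obtain ⟨T, hT⟩ := walk_eventually_ge a hnd h (n : ℤ)
    have hT' : ∀ t ≥ T, f t = true := fun t ht => by
      simp only [hf, decide_eq_true_eq]; exact hT t ht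
    have hup : {t : ℕ | walk a t = (n : ℤ) - 1 ∧ walk a (t + 1) = (n : ℤ)}
        = {t : ℕ | f t = false ∧ f (t + 1) = true} := by
      ext t
      have hs := walk_step a t
      simp only [Set.mem_setOf_eq, hf, decide_eq_false_iff_not, not_le, decide_eq_true_eq]
      constructor
      · rintro ⟨h1, h2⟩; omega
      · rintro ⟨h1, h2⟩; omega
    have hdn : {t : ℕ | walk a t = (n : ℤ) ∧ walk a (t + 1) = (n : ℤ) - 1}
        = {t : ℕ | f t = true ∧ f (t + 1) = false} := by
      ext t
      have hs := walk_step a t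
      have h1 := h t
      have h2 := h (t + 1)
      have h3 := walk_nonneg a h t
      simp only [Set.mem_setOf_eq, hf, decide_eq_false_iff_not, not_le, decide_eq_true_eq]
      constructor
      · rintro ⟨ha, hb⟩; omega
      · rintro ⟨ha, hb⟩; omega
    rw [hup, hdn]
    exact flip_count f h0 T hT'
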